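/- For n ≥ 6, r with 3 ≤ r ≤ n, and d such that C(d+r−1, r−1) > r·n, the exponent d·r can be bounded: choosing d minimal with C(d+r−1,r−1) > r·n yields d·r ≤ C·r²·n^{1/(r−1)} for an absolute constant C. -/

import Mathlib

/-- For `n ≥ 6`, `3 ≤ r ≤ n`, and `d` minimal with `C(d+r−1, r−1) > r·n`, the
exponent `d·r` is at most `C·r²·n^{1/(r−1)}` for an absolute constant `C`. -/
theorem stmt_18 :
    ∃ C : ℝ, 0 < C ∧ ∀ n r d : ℕ, 6 ≤ n → 3 ≤ r → r ≤ n →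
      Nat.choose (d + r - 1) (r - 1) > r * n →
      (∀ d' : ℕ, d' < d → ¬ (Nat.choose (d' + r - 1) (r - 1) > r * n)) →
      (d : ℝ) * r ≤ C * r ^ 2 * (n : ℝ) ^ (1 / ((r : ℝ) - 1)) := by
  refine ⟨2, by norm_num, ?_⟩
  intro n r d hn hr hrn hd hmin
  have hnpos : (0:ℝ) < n := by positivity
  have hre : (0:ℝ) < (r:ℝ) - 1 := by
    have : (3:ℝ) ≤ r := by exact_mod_cast hr
    linarith
  set e : ℝ := 1 / ((r:ℝ) - 1) with he
  have hepos : 0 < e := by positivity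
  have hne : (0:ℝ) ≤ (n:ℝ) ^ e := Real.rpow_nonneg hnpos.le _
  rcases Nat.eq_zero_or_pos d with h0 | hdpos
  · subst h0
    simp only [Nat.cast_zero, zero_mul]
    positivity
  -- key natural number inequality
  have hle : Nat.choose (d - 1 + r - 1) (r - 1) ≤ r * n :=
    le_of_not_gt (hmin (d - 1) (by omega))
  have hkey : d ^ (r - 1) ≤ r ^ (r - 1) * (r * n) := by
    have h1 : d ^ (r - 1) ≤ Nat.factorial (r - 1) * Nat.choose (d + r - 2) (r - 1) := by
      have := Nat.pow_sub_le_descFactorial (d + r - 2) (r - 1)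
      rw [Nat.descFactorial_eq_factorial_mul_choose] at this
      calc d ^ (r - 1) = (d + r - 2 + 1 - (r - 1)) ^ (r - 1) := by
            congr 1; omega
        _ ≤ _ := this
    have h2 : Nat.choose (d + r - 2) (r - 1) ≤ r * n := by
      have : d - 1 + r - 1 = d + r - 2 := by omega
      rwa [this] at hle
    have h3 : Nat.factorial (r - 1) ≤ r ^ (r - 1) := by
      calc Nat.factorial (r - 1) ≤ (r - 1) ^ (r - 1) := Nat.factorial_le_pow _
        _ ≤ r ^ (r - 1) := Nat.pow_le_pow_left (by omega) _
    calc d ^ (r - 1) ≤ Nat.factorial (r - 1) * Nat.choose (d + r - 2) (r - 1) := h1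
      _ ≤ r ^ (r - 1) * (r * n) := Nat.mul_le_mul h3 h2
  -- move to ℝ
  have hrcast : ((r - 1 : ℕ) : ℝ) = (r:ℝ) - 1 := by
    have : 1 ≤ r := by omega
    push_cast [this]; ring
  have hkeyR : (d:ℝ) ^ ((r:ℝ) - 1) ≤ (r:ℝ) ^ ((r:ℝ) - 1) * ((r:ℝ) * n) := by
    have := hkey
    have h := (Nat.cast_le (α := ℝ)).mpr hkey
    push_cast at h
    rw [← Real.rpow_natCast (d:ℝ) (r-1), ← Real.rpow_natCast (r:ℝ) (r-1), hrcast] at h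
    exact h
  have hdle : (d:ℝ) ≤ 2 * r * (n:ℝ) ^ e := by
    have hd0 : (0:ℝ) ≤ d := Nat.cast_nonneg d
    have hr0 : (0:ℝ) ≤ r := Nat.cast_nonneg r
    have step1 : (d:ℝ) ≤ ((r:ℝ) ^ ((r:ℝ) - 1) * ((r:ℝ) * n)) ^ e := by
      have := Real.rpow_le_rpow (by positivity) hkeyR hepos.le
      rwa [← Real.rpow_mul hd0, mul_one_div, div_self hre.ne', Real.rpow_one] at this
    have hrpow : ((r:ℝ) ^ ((r:ℝ) - 1) * ((r:ℝ) * n)) ^ e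
        = (r:ℝ) * ((r:ℝ) ^ e * (n:ℝ) ^ e) := by
      rw [Real.mul_rpow (by positivity) (by positivity),
        Real.mul_rpow (by positivity) hnpos.le,
        ← Real.rpow_mul hr0, mul_one_div, div_self hre.ne', Real.rpow_one]
    have hre2 : (r:ℝ) ^ e ≤ 2 := by
      have hnat : r ≤ 2 ^ (r - 1) := by have := Nat.lt_two_pow_self (n := r - 1); omega
      have hR : (r:ℝ) ≤ (2:ℝ) ^ ((r:ℝ) - 1) := by
        have h := (Nat.cast_le (α := ℝ)).mpr hnat
        push_cast at h
        rwa [← Real.rpow_natCast (2:ℝ) (r-1), hrcast] at h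
      have := Real.rpow_le_rpow hr0 hR hepos.le
      rwa [← Real.rpow_mul (by norm_num), mul_one_div, div_self hre.ne',
        Real.rpow_one] at this
    calc (d:ℝ) ≤ ((r:ℝ) ^ ((r:ℝ) - 1) * ((r:ℝ) * n)) ^ e := step1
      _ = (r:ℝ) * ((r:ℝ) ^ e * (n:ℝ) ^ e) := hrpow
      _ ≤ (r:ℝ) * (2 * (n:ℝ) ^ e) := by
          apply mul_le_mul_of_nonneg_left _ hr0
          exact mul_le_mul_of_nonneg_right hre2 hne
      _ = 2 * r * (n:ℝ) ^ e := by ring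
  have : (d:ℝ) * r ≤ (2 * r * (n:ℝ) ^ e) * r :=
    mul_le_mul_of_nonneg_right hdle (Nat.cast_nonneg r)
  calc (d:ℝ) * r ≤ (2 * r * (n:ℝ) ^ e) * r := this
    _ = 2 * (r:ℝ) ^ 2 * (n:ℝ) ^ e := by ring
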